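/- For every integer k ≥ 5 and every graph G on n ≥ k vertices, the number of k-element vertex subsets of G inducing a subgraph isomorphic to the cycle C_k satisfies P(C_k, G) ≤ (2n/k)·((n−1)/(k−1))^{k−1}. -/

import Mathlib

open Classical in
/-- Number of `k`-element vertex subsets of `G` whose induced subgraph is isomorphic to `H`,
where `k` is the number of vertices of `H`. -/
noncomputable def inducedCount {α β : Type*} [Fintype α] [Fintype β]
    (H : SimpleGraph α) (G : SimpleGraph β) : ℕ :=
  (Finset.univ.filter fun S : Finset β =>
    S.card = Fintype.card α ∧ Nonempty ((G.induce (S : Set β)) ≃g H)).card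

/-- The maximum of `inducedCount H G` over all graphs `G` on `n` vertices. -/
noncomputable def maxInducedCount {α : Type*} [Fintype α] (H : SimpleGraph α) (n : ℕ) : ℕ :=
  sSup {m | ∃ G : SimpleGraph (Fin n), inducedCount H G = m}


namespace PGaux
open Finset

lemma amgm' (j j' : ℕ) (hj' : j' = j + 1) {a b : ℝ} (ha : 0 ≤ a) (hb : 0 ≤ b) :
    a * (b / (j : ℝ)) ^ j ≤ ((a + b) / (j' : ℝ)) ^ j' := by
  subst hj'
  rcases Nat.eq_zero_or_pos j with rfl | hj
  · simp
    linarith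
  · have hJ : (0:ℝ) < (j:ℝ) := by exact_mod_cast hj
    have hJ1 : (0:ℝ) < (j:ℝ) + 1 := by linarith
    have hw : 1 / ((j:ℝ)+1) + (j:ℝ)/((j:ℝ)+1) = 1 := by field_simp; ring
    have key := Real.geom_mean_le_arith_mean2_weighted
      (by positivity : (0:ℝ) ≤ 1/((j:ℝ)+1)) (by positivity : (0:ℝ) ≤ (j:ℝ)/((j:ℝ)+1))
      ha (by positivity : (0:ℝ) ≤ b / (j:ℝ)) hw
    have hR : 1/((j:ℝ)+1) * a + (j:ℝ)/((j:ℝ)+1) * (b/(j:ℝ)) = (a+b)/((j:ℝ)+1) := by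
      field_simp
    rw [hR] at key
    have hLnn : (0:ℝ) ≤ a ^ (1/((j:ℝ)+1)) * (b/(j:ℝ)) ^ ((j:ℝ)/((j:ℝ)+1)) := by positivity
    have key2 := Real.rpow_le_rpow hLnn key (by positivity : (0:ℝ) ≤ (j:ℝ)+1)
    have hL : (a ^ (1/((j:ℝ)+1)) * (b/(j:ℝ)) ^ ((j:ℝ)/((j:ℝ)+1))) ^ ((j:ℝ)+1)
        = a * (b / (j : ℝ)) ^ j := by
      rw [Real.mul_rpow (by positivity) (by positivity),
        ← Real.rpow_mul ha, ← Real.rpow_mul (by positivity)]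
      have h1 : 1/((j:ℝ)+1) * ((j:ℝ)+1) = 1 := by field_simp
      have h2 : (j:ℝ)/((j:ℝ)+1) * ((j:ℝ)+1) = (j:ℝ) := by field_simp
      rw [h1, h2, Real.rpow_one, Real.rpow_natCast]
    have hRR : ((a+b)/((j:ℝ)+1)) ^ ((j:ℝ)+1) = ((a+b)/((j:ℝ)+1)) ^ (j+1) := by
      rw [show ((j:ℝ)+1) = ((j+1:ℕ):ℝ) by push_cast; ring, Real.rpow_natCast]
    rw [hL, hRR] at key2
    convert key2 using 3 <;> push_cast <;> ring


lemma fin_sub_val {k : ℕ} (i j : ℕ) (hi : i < k) (hj : j < k) :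
    ((⟨i, hi⟩ - ⟨j, hj⟩ : Fin k)).val = if j ≤ i then i - j else i + (k - j) := by
  rw [Fin.sub_def]
  dsimp
  split_ifs with h
  · have h2 : (k - j) + i = (i - j) + k := by omega
    rw [h2, Nat.add_mod_right, Nat.mod_eq_of_lt (by omega)]
  · rw [Nat.mod_eq_of_lt (by omega)]
    omega


lemma cyc_adj {k : ℕ} (hk : 5 ≤ k) (i j : ℕ) (hi : i < k) (hj : j < k) :
    (SimpleGraph.cycleGraph k).Adj ⟨i, hi⟩ ⟨j, hj⟩ ↔
      (i + 1 = j ∨ j + 1 = i ∨ (i = 0 ∧ j = k - 1) ∨ (j = 0 ∧ i = k - 1)) := by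
  rw [SimpleGraph.cycleGraph_adj', fin_sub_val i j hi hj, fin_sub_val j i hj hi]
  split_ifs <;> omega


variable {n : ℕ} (G : SimpleGraph (Fin n))

open Classical in
noncomputable def nbr (x : Fin n) (U : Finset (Fin n)) : Finset (Fin n) :=
  U.filter (fun y => G.Adj x y)

open Classical in
noncomputable def nonNbr (x : Fin n) (U : Finset (Fin n)) : Finset (Fin n) :=
  U.filter (fun y => ¬ G.Adj x y)

lemma mem_nbr {x y : Fin n} {U : Finset (Fin n)} : y ∈ nbr G x U ↔ y ∈ U ∧ G.Adj x y := by
  simp [nbr]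

lemma mem_nonNbr {x y : Fin n} {U : Finset (Fin n)} : y ∈ nonNbr G x U ↔ y ∈ U ∧ ¬ G.Adj x y := by
  simp [nonNbr]

lemma nbr_card_add_nonNbr_card (x : Fin n) (U : Finset (Fin n)) :
    (nbr G x U).card + (nonNbr G x U).card = U.card := by
  classical
  rw [nbr, nonNbr]
  exact Finset.card_filter_add_card_filter_not (fun y => G.Adj x y)

open Classical in
noncomputable def pathSet (j : ℕ) (x : Fin n) (U : Finset (Fin n)) : Finset (Fin j → Fin n) :=
  univ.filter fun g =>
    (∀ i, g i ∈ U) ∧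
    (∀ i : Fin j, (i : ℕ) = 0 → G.Adj x (g i)) ∧
    (∀ i : Fin j, 1 ≤ (i : ℕ) → ¬ G.Adj x (g i)) ∧
    (∀ i i' : Fin j, (i : ℕ) + 1 = (i' : ℕ) → G.Adj (g i) (g i')) ∧
    (∀ i i' : Fin j, (i : ℕ) + 2 ≤ (i' : ℕ) → ¬ G.Adj (g i) (g i'))

lemma mem_pathSet {j : ℕ} {x : Fin n} {U : Finset (Fin n)} {g : Fin j → Fin n} :
    g ∈ pathSet G j x U ↔
    ((∀ i, g i ∈ U) ∧
    (∀ i : Fin j, (i : ℕ) = 0 → G.Adj x (g i)) ∧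
    (∀ i : Fin j, 1 ≤ (i : ℕ) → ¬ G.Adj x (g i)) ∧
    (∀ i i' : Fin j, (i : ℕ) + 1 = (i' : ℕ) → G.Adj (g i) (g i')) ∧
    (∀ i i' : Fin j, (i : ℕ) + 2 ≤ (i' : ℕ) → ¬ G.Adj (g i) (g i'))) := by
  simp [pathSet]


lemma pathSet_card_le : ∀ (j : ℕ) (x : Fin n) (U : Finset (Fin n)),
    ((pathSet G j x U).card : ℝ) ≤ ((U.card : ℝ) / (j : ℝ)) ^ j := by
  intro j
  induction j with
  | zero =>
    intro x U
    have h1 : (pathSet G 0 x U).card ≤ 1 :=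
      Finset.card_le_one.mpr (fun a _ b _ => Subsingleton.elim a b)
    simpa using (Nat.cast_le (α := ℝ)).mpr h1
  | succ j ih =>
    intro x U
    have hstep : (pathSet G (j+1) x U).card ≤
        ((nbr G x U).sigma
          (fun y => pathSet G j y (nonNbr G x U))).card := by
      apply Finset.card_le_card_of_injOn
        (fun g => ⟨g 0, fun i => g i.succ⟩)
      · intro g hg
        rw [Finset.mem_coe, mem_pathSet] at hg
        obtain ⟨h1, h2, h3, h4, h5⟩ := hg
        rw [Finset.mem_coe, Finset.mem_sigma]
        constructor
        · exact (mem_nbr G).mpr ⟨h1 0, h2 0 rfl⟩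
        · rw [mem_pathSet]
          refine ⟨?_, ?_, ?_, ?_, ?_⟩
          · intro i
            exact (mem_nonNbr G).mpr ⟨h1 i.succ, h3 i.succ (by simp [Fin.val_succ])⟩
          · intro i hi
            exact h4 0 i.succ (by simp [Fin.val_succ, hi])
          · intro i hi
            exact h5 0 i.succ (by simp [Fin.val_succ]; omega)
          · intro i i' hii
            exact h4 i.succ i'.succ (by simp [Fin.val_succ]; omega)
          · intro i i' hii
            exact h5 i.succ i'.succ (by simp [Fin.val_succ]; omega)
      · intro g hg g' hg' heq
        simp only [Sigma.mk.inj_iff, heq_eq_eq] at heq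
        funext m
        refine Fin.cases ?_ ?_ m
        · exact heq.1
        · intro i
          exact congrFun heq.2 i
    have hcast : ((pathSet G (j+1) x U).card : ℝ) ≤
        ∑ y ∈ (nbr G x U), ((pathSet G j y (nonNbr G x U)).card : ℝ) := by
      rw [← Nat.cast_sum]
      exact_mod_cast le_trans hstep (le_of_eq (Finset.card_sigma _ _))
    have hsum : ∑ y ∈ (nbr G x U), ((pathSet G j y (nonNbr G x U)).card : ℝ)
        ≤ ∑ _y ∈ (nbr G x U), (((nonNbr G x U).card : ℝ) / (j:ℝ)) ^ j :=
      Finset.sum_le_sum (fun y _ => ih y _)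
    rw [Finset.sum_const, nsmul_eq_mul] at hsum
    have hfin : (((nbr G x U).card : ℝ)) *
          (((nonNbr G x U).card : ℝ) / (j:ℝ)) ^ j
        ≤ ((U.card : ℝ) / ((j+1 : ℕ) : ℝ)) ^ (j+1) := by
      have := amgm' j (j+1) rfl
        (by positivity : (0:ℝ) ≤ ((nbr G x U).card : ℝ))
        (by positivity : (0:ℝ) ≤ ((nonNbr G x U).card : ℝ))
      have hc : ((nbr G x U).card : ℝ) + ((nonNbr G x U).card : ℝ)
          = (U.card : ℝ) := by
        rw [← Nat.cast_add]
        exact_mod_cast congrArg (fun z : ℕ => (z:ℝ)) (nbr_card_add_nonNbr_card G x U)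
      rw [hc] at this
      exact this
    calc ((pathSet G (j+1) x U).card : ℝ) ≤ _ := hcast
      _ ≤ _ := hsum
      _ ≤ ((U.card : ℝ) / ((j+1:ℕ) : ℝ)) ^ (j+1) := hfin
      _ = ((U.card : ℝ) / ((j+1:ℕ) : ℝ)) ^ (j+1) := rfl


open Classical in
noncomputable def patternSet (k : ℕ) : Finset (Fin k → Fin n) :=
  univ.filter fun f => Function.Injective f ∧
    ∀ i j, G.Adj (f i) (f j) ↔ (SimpleGraph.cycleGraph k).Adj i j

lemma mem_patternSet {k : ℕ} {f : Fin k → Fin n} :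
    f ∈ patternSet G k ↔ (Function.Injective f ∧
      ∀ i j, G.Adj (f i) (f j) ↔ (SimpleGraph.cycleGraph k).Adj i j) := by
  simp [patternSet]


lemma cyc_adj2 {k : ℕ} (hk : 5 ≤ k) (a b : Fin k) :
    (SimpleGraph.cycleGraph k).Adj a b ↔
      ((a:ℕ) + 1 = (b:ℕ) ∨ (b:ℕ) + 1 = (a:ℕ) ∨ ((a:ℕ) = 0 ∧ (b:ℕ) = k - 1)
        ∨ ((b:ℕ) = 0 ∧ (a:ℕ) = k - 1)) := by
  have h := cyc_adj hk (a:ℕ) (b:ℕ) a.isLt b.isLt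
  simpa using h

def emb2 (k : ℕ) (hk : 5 ≤ k) : Fin (k-3) → Fin k :=
  fun i => ⟨(i:ℕ)+2, by omega⟩

section fiber

variable {k : ℕ}

/-- The fiber over a pair `(y, z)` with `z ≠ y` injects into a path set. -/
lemma fiber2_le (hk : 5 ≤ k) (h0k : 0 < k) (h1k : 1 < k) (hk1k : k - 1 < k)
    (v y z : Fin n) (hzy : z ≠ y) :
    ((((patternSet G k).filter (fun f => f ⟨0, h0k⟩ = v)).filter
        (fun f => (f ⟨1, h1k⟩, f ⟨k-1, hk1k⟩) = (y, z))).card) ≤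
      (pathSet G (k-3) y (nonNbr G v (univ.erase v))).card := by
  classical
  apply Finset.card_le_card_of_injOn (fun f => f ∘ emb2 k hk)
  · intro f hf
    rw [Finset.mem_coe, Finset.mem_filter, Finset.mem_filter, mem_patternSet] at hf
    obtain ⟨⟨⟨hinj, hpat⟩, h0v⟩, hfp⟩ := hf
    have h1y : f ⟨1, h1k⟩ = y := congrArg Prod.fst hfp
    have hkz : f ⟨k-1, hk1k⟩ = z := congrArg Prod.snd hfp
    rw [Finset.mem_coe, mem_pathSet]
    refine ⟨?_, ?_, ?_, ?_, ?_⟩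
    · intro i
      have hilt := i.isLt
      simp only [Function.comp_apply]
      rw [mem_nonNbr, Finset.mem_erase]
      have hne : f (emb2 k hk i) ≠ v := by
        rw [← h0v]
        intro hcon
        have h' := congrArg Fin.val (hinj hcon)
        have h'' : (i:ℕ) + 2 = 0 := h'
        omega
      refine ⟨⟨hne, Finset.mem_univ _⟩, ?_⟩
      rw [← h0v]
      intro hcon
      have h' := (cyc_adj2 hk _ _).mp ((hpat _ _).mp hcon)
      have h'' : ((0:ℕ) + 1 = (i:ℕ)+2 ∨ ((i:ℕ)+2) + 1 = 0 ∨ ((0:ℕ) = 0 ∧ (i:ℕ)+2 = k-1)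
          ∨ ((i:ℕ)+2 = 0 ∧ (0:ℕ) = k-1)) := h'
      omega
    · intro i hi
      have hilt := i.isLt
      simp only [Function.comp_apply]
      rw [← h1y]
      refine (hpat _ _).mpr ((cyc_adj2 hk _ _).mpr ?_)
      show ((1:ℕ) + 1 = (i:ℕ)+2 ∨ ((i:ℕ)+2) + 1 = 1 ∨ ((1:ℕ) = 0 ∧ (i:ℕ)+2 = k-1)
          ∨ ((i:ℕ)+2 = 0 ∧ (1:ℕ) = k-1))
      omega
    · intro i hi
      have hilt := i.isLt
      simp only [Function.comp_apply]
      rw [← h1y]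
      intro hcon
      have h' := (cyc_adj2 hk _ _).mp ((hpat _ _).mp hcon)
      have h'' : ((1:ℕ) + 1 = (i:ℕ)+2 ∨ ((i:ℕ)+2) + 1 = 1 ∨ ((1:ℕ) = 0 ∧ (i:ℕ)+2 = k-1)
          ∨ ((i:ℕ)+2 = 0 ∧ (1:ℕ) = k-1)) := h'
      omega
    · intro i i' hii
      have hilt := i.isLt
      have hilt' := i'.isLt
      simp only [Function.comp_apply]
      refine (hpat _ _).mpr ((cyc_adj2 hk _ _).mpr ?_)
      show ((i:ℕ)+2 + 1 = (i':ℕ)+2 ∨ ((i':ℕ)+2) + 1 = (i:ℕ)+2 ∨ ((i:ℕ)+2 = 0 ∧ (i':ℕ)+2 = k-1)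
          ∨ ((i':ℕ)+2 = 0 ∧ (i:ℕ)+2 = k-1))
      omega
    · intro i i' hii
      have hilt := i.isLt
      have hilt' := i'.isLt
      simp only [Function.comp_apply]
      intro hcon
      have h' := (cyc_adj2 hk _ _).mp ((hpat _ _).mp hcon)
      have h'' : ((i:ℕ)+2 + 1 = (i':ℕ)+2 ∨ ((i':ℕ)+2) + 1 = (i:ℕ)+2 ∨ ((i:ℕ)+2 = 0 ∧ (i':ℕ)+2 = k-1)
          ∨ ((i':ℕ)+2 = 0 ∧ (i:ℕ)+2 = k-1)) := h'
      omega
  · intro f hf f' hf' heq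
    simp only [Finset.coe_filter, Set.mem_setOf_eq] at hf hf'
    obtain ⟨hf1, hfp⟩ := hf
    obtain ⟨hf1', hfp'⟩ := hf'
    rw [Finset.mem_filter, mem_patternSet] at hf1 hf1'
    obtain ⟨⟨hinj, hpat⟩, h0v⟩ := hf1
    obtain ⟨⟨hinj', hpat'⟩, h0v'⟩ := hf1'
    have h1y : f ⟨1, h1k⟩ = y := congrArg Prod.fst hfp
    have hkz : f ⟨k-1, hk1k⟩ = z := congrArg Prod.snd hfp
    have h1y' : f' ⟨1, h1k⟩ = y := congrArg Prod.fst hfp'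
    have hkz' : f' ⟨k-1, hk1k⟩ = z := congrArg Prod.snd hfp'
    funext x
    have hx := x.isLt
    have hcase : (x:ℕ) = 0 ∨ (x:ℕ) = 1 ∨ (x:ℕ) = k-1 ∨ (2 ≤ (x:ℕ) ∧ (x:ℕ) ≤ k-2) := by
      omega
    rcases hcase with hc | hc | hc | hc
    · have hxe : x = ⟨0, h0k⟩ := Fin.ext hc
      rw [hxe, h0v, h0v']
    · have hxe : x = ⟨1, h1k⟩ := Fin.ext hc
      rw [hxe, h1y, h1y']
    · have hxe : x = ⟨k-1, hk1k⟩ := Fin.ext hc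
      rw [hxe, hkz, hkz']
    · have hlt : (x:ℕ) - 2 < k - 3 := by omega
      have hxe : x = emb2 k hk ⟨(x:ℕ)-2, hlt⟩ := by
        apply Fin.ext
        show (x:ℕ) = ((x:ℕ)-2) + 2
        omega
      rw [hxe]
      exact congrFun heq ⟨(x:ℕ)-2, hlt⟩

/-- The diagonal fiber is empty. -/
lemma fiber2_diag (hk : 5 ≤ k) (h0k : 0 < k) (h1k : 1 < k) (hk1k : k - 1 < k)
    (v y : Fin n) :
    ((((patternSet G k).filter (fun f => f ⟨0, h0k⟩ = v)).filter
        (fun f => (f ⟨1, h1k⟩, f ⟨k-1, hk1k⟩) = (y, y))).card) = 0 := by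
  classical
  rw [Finset.card_eq_zero, Finset.eq_empty_iff_forall_notMem]
  intro f hf
  rw [Finset.mem_filter, Finset.mem_filter, mem_patternSet] at hf
  obtain ⟨⟨⟨hinj, hpat⟩, h0v⟩, hfp⟩ := hf
  have h1 : f ⟨1, h1k⟩ = y := congrArg Prod.fst hfp
  have h2 : f ⟨k-1, hk1k⟩ = y := congrArg Prod.snd hfp
  have h3 := congrArg Fin.val (hinj (h1.trans h2.symm))
  have h4 : (1:ℕ) = k - 1 := h3
  omega

/-- Decomposition of the fiber at `v` over the values at positions 1 and `k-1`. -/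
lemma fiber_decomp (hk : 5 ≤ k) (h0k : 0 < k) (h1k : 1 < k) (hk1k : k - 1 < k) (v : Fin n) :
    (((patternSet G k).filter (fun f => f ⟨0, h0k⟩ = v)).card) ≤
      ∑ y ∈ nbr G v univ, ((nbr G v univ).card - 1) *
        (pathSet G (k-3) y (nonNbr G v (univ.erase v))).card := by
  classical
  set N : Finset (Fin n) := nbr G v univ with hN
  set U : Finset (Fin n) := nonNbr G v (univ.erase v) with hU
  set Fv := (patternSet G k).filter (fun f => f ⟨0, h0k⟩ = v) with hFv
  have hstep1 : Fv.card = ∑ p ∈ N ×ˢ N,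
      (Fv.filter (fun f => (f ⟨1, h1k⟩, f ⟨k-1, hk1k⟩) = p)).card := by
    apply Finset.card_eq_sum_card_fiberwise
    intro f hf
    rw [hFv, Finset.mem_coe, Finset.mem_filter, mem_patternSet] at hf
    obtain ⟨⟨hinj, hpat⟩, h0v⟩ := hf
    rw [Finset.mem_coe, Finset.mem_product]
    constructor
    · rw [hN, mem_nbr]
      refine ⟨Finset.mem_univ _, ?_⟩
      rw [← h0v]
      refine (hpat _ _).mpr ((cyc_adj2 hk _ _).mpr ?_)
      show ((0:ℕ) + 1 = 1 ∨ (1:ℕ) + 1 = 0 ∨ ((0:ℕ) = 0 ∧ (1:ℕ) = k-1) ∨ ((1:ℕ) = 0 ∧ (0:ℕ) = k-1))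
      omega
    · rw [hN, mem_nbr]
      refine ⟨Finset.mem_univ _, ?_⟩
      rw [← h0v]
      refine (hpat _ _).mpr ((cyc_adj2 hk _ _).mpr ?_)
      show ((0:ℕ) + 1 = k-1 ∨ (k-1) + 1 = 0 ∨ ((0:ℕ) = 0 ∧ k-1 = k-1) ∨ (k-1 = 0 ∧ (0:ℕ) = k-1))
      omega
  rw [hstep1, Finset.sum_product]
  apply Finset.sum_le_sum
  intro y hy
  have hsplit : ∑ z ∈ N, (Fv.filter (fun f => (f ⟨1, h1k⟩, f ⟨k-1, hk1k⟩) = (y, z))).card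
      = (Fv.filter (fun f => (f ⟨1, h1k⟩, f ⟨k-1, hk1k⟩) = (y, y))).card
        + ∑ z ∈ N.erase y, (Fv.filter (fun f => (f ⟨1, h1k⟩, f ⟨k-1, hk1k⟩) = (y, z))).card :=
    (Finset.add_sum_erase N _ hy).symm
  rw [hsplit, fiber2_diag G hk h0k h1k hk1k v y, zero_add]
  calc ∑ z ∈ N.erase y, (Fv.filter (fun f => (f ⟨1, h1k⟩, f ⟨k-1, hk1k⟩) = (y, z))).card
      ≤ ∑ _z ∈ N.erase y, (pathSet G (k-3) y U).card := by
        apply Finset.sum_le_sum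
        intro z hz
        exact fiber2_le G hk h0k h1k hk1k v y z (Finset.ne_of_mem_erase hz)
    _ = (N.erase y).card * (pathSet G (k-3) y U).card := by
        rw [Finset.sum_const, smul_eq_mul]
    _ = (N.card - 1) * (pathSet G (k-3) y U).card := by
        rw [Finset.card_erase_of_mem hy]

/-- Per-vertex bound. -/
lemma fiber_card_le (hk : 5 ≤ k) (hn : k ≤ n) (h0k : 0 < k) (v : Fin n) :
    ((((patternSet G k).filter (fun f => f ⟨0, h0k⟩ = v)).card) : ℝ) ≤
      4 * (((n : ℝ) - 1) / (((k-1 : ℕ)) : ℝ)) ^ (k - 1) := by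
  classical
  have h1k : 1 < k := by omega
  have hk1k : k - 1 < k := by omega
  set N : Finset (Fin n) := nbr G v univ with hN
  set U : Finset (Fin n) := nonNbr G v (univ.erase v) with hU
  -- cardinality bookkeeping
  have hUcard : N.card + U.card = n - 1 := by
    have h1 : nbr G v (univ.erase v) = N := by
      ext y
      rw [mem_nbr, hN, mem_nbr, Finset.mem_erase]
      constructor
      · rintro ⟨⟨_, _⟩, hadj⟩; exact ⟨Finset.mem_univ _, hadj⟩
      · rintro ⟨_, hadj⟩; exact ⟨⟨hadj.ne', Finset.mem_univ _⟩, hadj⟩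
    have h2 := nbr_card_add_nonNbr_card G v (univ.erase v)
    rw [h1, ← hU] at h2
    rw [h2, Finset.card_erase_of_mem (Finset.mem_univ v), Finset.card_univ, Fintype.card_fin]
  -- cast the decomposition to ℝ and apply the path bound
  have hreal : ((((patternSet G k).filter (fun f => f ⟨0, h0k⟩ = v)).card) : ℝ) ≤
      (N.card : ℝ) * (((N.card - 1 : ℕ) : ℝ) * (((U.card : ℝ) / ((k-3 : ℕ) : ℝ)) ^ (k-3))) := by
    calc ((((patternSet G k).filter (fun f => f ⟨0, h0k⟩ = v)).card) : ℝ)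
        ≤ ((∑ y ∈ N, (N.card - 1) * (pathSet G (k-3) y U).card : ℕ) : ℝ) := by
          exact_mod_cast fiber_decomp G hk h0k h1k hk1k v
      _ = ∑ y ∈ N, ((N.card - 1 : ℕ) : ℝ) * ((pathSet G (k-3) y U).card : ℝ) := by
          push_cast
          rfl
      _ ≤ ∑ _y ∈ N, ((N.card - 1 : ℕ) : ℝ) * (((U.card : ℝ) / ((k-3 : ℕ) : ℝ)) ^ (k-3)) := by
          apply Finset.sum_le_sum
          intro y _
          exact mul_le_mul_of_nonneg_left (pathSet_card_le G (k-3) y U) (by positivity)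
      _ = (N.card : ℝ) * (((N.card - 1 : ℕ) : ℝ) * (((U.card : ℝ) / ((k-3 : ℕ) : ℝ)) ^ (k-3))) := by
          rw [Finset.sum_const, nsmul_eq_mul]
  -- AM-GM chain
  have hBnn : (0:ℝ) ≤ ((N.card - 1 : ℕ) : ℝ) := by positivity
  have hMnn : (0:ℝ) ≤ (U.card : ℝ) := by positivity
  have hDnn : (0:ℝ) ≤ (N.card : ℝ) := by positivity
  have ham1 : (((N.card - 1 : ℕ) : ℝ)/2) * (((U.card : ℝ) / ((k-3:ℕ):ℝ)) ^ (k-3)) ≤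
      (((((N.card - 1 : ℕ) : ℝ)/2) + (U.card : ℝ)) / ((k-2:ℕ):ℝ)) ^ (k-2) :=
    amgm' (k-3) (k-2) (by omega) (by linarith) hMnn
  have ham2 : ((N.card : ℝ)/2) * ((((((N.card - 1 : ℕ) : ℝ)/2) + (U.card : ℝ)) / ((k-2:ℕ):ℝ)) ^ (k-2)) ≤
      ((((N.card : ℝ)/2) + ((((N.card - 1 : ℕ) : ℝ)/2) + (U.card : ℝ))) / ((k-1:ℕ):ℝ)) ^ (k-1) :=
    amgm' (k-2) (k-1) (by omega) (by linarith) (by linarith)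
  have hbase : ((N.card : ℝ)/2) + ((((N.card - 1 : ℕ) : ℝ)/2) + (U.card : ℝ)) ≤ (n:ℝ) - 1 := by
    have hnat : N.card + (N.card - 1) + 2 * U.card ≤ 2 * (n - 1) := by omega
    have hcast := (Nat.cast_le (α := ℝ)).mpr hnat
    have h1n : (1:ℕ) ≤ n := by omega
    push_cast [Nat.cast_sub h1n] at hcast
    linarith
  have hkpos : (0:ℝ) < ((k-1:ℕ):ℝ) := by
    have h : (0:ℕ) < k-1 := by omega
    exact_mod_cast h
  have hlast : ((((N.card : ℝ)/2) + ((((N.card - 1 : ℕ) : ℝ)/2) + (U.card : ℝ))) / ((k-1:ℕ):ℝ)) ^ (k-1) ≤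
      (((n:ℝ) - 1) / ((k-1:ℕ):ℝ)) ^ (k-1) := by
    apply pow_le_pow_left₀ (by positivity)
    exact (div_le_div_iff_of_pos_right hkpos).mpr hbase
  calc ((((patternSet G k).filter (fun f => f ⟨0, h0k⟩ = v)).card) : ℝ)
      ≤ (N.card : ℝ) * (((N.card - 1 : ℕ) : ℝ) * (((U.card : ℝ) / ((k-3:ℕ):ℝ)) ^ (k-3))) := hreal
    _ = 4 * (((N.card : ℝ)/2) * ((((N.card - 1 : ℕ) : ℝ)/2) * (((U.card : ℝ) / ((k-3:ℕ):ℝ)) ^ (k-3)))) := by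
        ring
    _ ≤ 4 * (((N.card : ℝ)/2) * ((((((N.card - 1 : ℕ) : ℝ)/2) + (U.card : ℝ)) / ((k-2:ℕ):ℝ)) ^ (k-2))) := by
        have h := mul_le_mul_of_nonneg_left ham1 (by linarith : (0:ℝ) ≤ (N.card : ℝ)/2)
        nlinarith [h]
    _ ≤ 4 * (((((N.card : ℝ)/2) + ((((N.card - 1 : ℕ) : ℝ)/2) + (U.card : ℝ))) / ((k-1:ℕ):ℝ)) ^ (k-1)) := by
        linarith
    _ ≤ 4 * ((((n:ℝ) - 1) / ((k-1:ℕ):ℝ)) ^ (k-1)) := by linarith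

end fiber


noncomputable def autE (k : ℕ) [NeZero k] (a : Fin k) (b : Bool) : Fin k ≃ Fin k :=
  if b then Equiv.subLeft a else Equiv.addLeft a

lemma autE_adj {k : ℕ} [NeZero k] (a : Fin k) (b : Bool) (i j : Fin k) :
    (SimpleGraph.cycleGraph k).Adj (autE k a b i) (autE k a b j) ↔
      (SimpleGraph.cycleGraph k).Adj i j := by
  cases b
  · simp only [autE, Bool.false_eq_true, if_false, Equiv.coe_addLeft]
    rw [SimpleGraph.cycleGraph_adj', SimpleGraph.cycleGraph_adj',
      add_sub_add_left_eq_sub, add_sub_add_left_eq_sub]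
  · simp only [autE, if_true, Equiv.subLeft_apply]
    rw [SimpleGraph.cycleGraph_adj', SimpleGraph.cycleGraph_adj',
      sub_sub_sub_cancel_left, sub_sub_sub_cancel_left]
    exact or_comm

lemma autE_zero {k : ℕ} [NeZero k] (a : Fin k) (b : Bool) : autE k a b 0 = a := by
  cases b <;> simp [autE]

lemma one_add_one_ne_zero_fin {k : ℕ} (hk : 5 ≤ k) [NeZero k] : (1 : Fin k) + 1 ≠ 0 := by
  intro h
  have h1v : ((1 : Fin k) : ℕ) = 1 := by
    rw [Fin.val_one']
    exact Nat.mod_eq_of_lt (by omega)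
  have hv2 : (((1:Fin k):ℕ) + ((1:Fin k):ℕ)) % k = ((0:Fin k):ℕ) := congrArg Fin.val h
  rw [h1v, Fin.val_zero, Nat.mod_eq_of_lt (by omega)] at hv2
  omega

lemma autE_inj {k : ℕ} (hk : 5 ≤ k) [NeZero k] {a a' : Fin k} {b b' : Bool}
    (h : ∀ i, autE k a b i = autE k a' b' i) : a = a' ∧ b = b' := by
  have h0 := h 0
  rw [autE_zero, autE_zero] at h0
  subst h0
  refine ⟨rfl, ?_⟩
  have h1 := h 1
  cases b <;> cases b' <;> simp only [autE, if_true, if_false, Bool.false_eq_true,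
    Equiv.coe_addLeft, Equiv.subLeft_apply] at h1 ⊢
  all_goals
    exfalso
    rw [sub_eq_add_neg] at h1
    first
      | exact one_add_one_ne_zero_fin hk
          (eq_neg_iff_add_eq_zero.mp (add_left_cancel h1))
      | exact one_add_one_ne_zero_fin hk
          (eq_neg_iff_add_eq_zero.mp (add_left_cancel h1).symm)

open Classical in
lemma stepA {k : ℕ} (hk : 5 ≤ k) (hn : k ≤ n) :
    (Finset.univ.filter fun S : Finset (Fin n) =>
      S.card = Fintype.card (Fin k) ∧
        Nonempty ((G.induce (S : Set (Fin n))) ≃g SimpleGraph.cycleGraph k)).card * (2 * k) ≤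
      (patternSet G k).card := by
  classical
  haveI : NeZero k := ⟨by omega⟩
  haveI : Nonempty (Fin n) := ⟨⟨0, by omega⟩⟩
  set s : Finset (Finset (Fin n)) := Finset.univ.filter fun S : Finset (Fin n) =>
      S.card = Fintype.card (Fin k) ∧
        Nonempty ((G.induce (S : Set (Fin n))) ≃g SimpleGraph.cycleGraph k) with hs
  have hcard : (s ×ˢ (univ : Finset (Fin k × Bool))).card = s.card * (2 * k) := by
    rw [Finset.card_product, Finset.card_univ, Fintype.card_prod, Fintype.card_fin,
      Fintype.card_bool]
    ring
  rw [← hcard]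
  apply Finset.card_le_card_of_injOn
    (fun p => if h : Nonempty ((G.induce ((p.1 : Set (Fin n)))) ≃g SimpleGraph.cycleGraph k)
      then fun i => ((Classical.choice h).symm (autE k p.2.1 p.2.2 i) : Fin n)
      else fun _ => Classical.arbitrary (Fin n))
  · rintro ⟨S, a, b⟩ hp
    rw [Finset.mem_coe, Finset.mem_product, hs, Finset.mem_filter] at hp
    obtain ⟨⟨-, hcardS, hne⟩, -⟩ := hp
    beta_reduce
    rw [dif_pos hne]
    set e := Classical.choice hne
    rw [Finset.mem_coe, mem_patternSet]
    constructor
    · intro i j hij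
      have h1 : e.symm (autE k a b i) = e.symm (autE k a b j) := Subtype.val_injective hij
      have h2 := e.symm.toEquiv.injective h1
      exact (autE k a b).injective h2
    · intro i j
      have hadj : G.Adj ((e.symm (autE k a b i)) : Fin n) ((e.symm (autE k a b j)) : Fin n) ↔
          (G.induce (S : Set (Fin n))).Adj (e.symm (autE k a b i)) (e.symm (autE k a b j)) :=
        Iff.rfl
      rw [hadj, SimpleGraph.Iso.map_adj_iff, autE_adj]
  · rintro ⟨S, a, b⟩ hp ⟨S', a', b'⟩ hp' heq
    simp only [Finset.mem_coe, Finset.mem_product, hs, Finset.mem_filter] at hp hp'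
    obtain ⟨⟨-, hcardS, hne⟩, -⟩ := hp
    obtain ⟨⟨-, hcardS', hne'⟩, -⟩ := hp'
    rw [Fintype.card_fin] at hcardS hcardS'
    have himg : ∀ (T : Finset (Fin n)) (hT : T.card = k)
        (hneT : Nonempty ((G.induce ((T : Set (Fin n)))) ≃g SimpleGraph.cycleGraph k))
        (c : Fin k) (d : Bool),
        Finset.image (fun i => (((Classical.choice hneT).symm (autE k c d i) : Fin n))) univ
          = T := by
      intro T hT hneT c d
      apply Finset.eq_of_subset_of_card_le
      · intro w hw
        rw [Finset.mem_image] at hw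
        obtain ⟨i, -, hi⟩ := hw
        rw [← hi]
        exact ((Classical.choice hneT).symm (autE k c d i)).2
      · rw [hT, Finset.card_image_of_injective _ ?hinj, Finset.card_univ, Fintype.card_fin]
        intro i j hij
        exact (autE k c d).injective ((Classical.choice hneT).symm.toEquiv.injective
          (Subtype.val_injective hij))
    have hSS' : S = S' := by
      have h1 := himg S hcardS hne a b
      have h2 := himg S' hcardS' hne' a' b'
      rw [← h1, ← h2]
      have heq1 : (fun i => (((Classical.choice hne).symm (autE k a b i) : Fin n)))
          = (fun i => (((Classical.choice hne').symm (autE k a' b' i) : Fin n))) := by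
        have hq := heq
        dsimp only at hq
        rw [dif_pos hne, dif_pos hne'] at hq
        exact hq
      rw [heq1]
    subst hSS'
    have heq1 : (fun i => (((Classical.choice hne).symm (autE k a b i) : Fin n)))
        = (fun i => (((Classical.choice hne).symm (autE k a' b' i) : Fin n))) := by
      have hq := heq
      dsimp only at hq
      rw [dif_pos hne, dif_pos hne'] at hq
      exact hq
    have hpt : ∀ i, autE k a b i = autE k a' b' i := by
      intro i
      have h3 := congrFun heq1 i
      exact (Classical.choice hne).symm.toEquiv.injective (Subtype.val_injective h3)
    obtain ⟨ha, hb⟩ := autE_inj hk hpt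
    subst ha
    subst hb
    rfl



open Classical in
lemma patternSet_card_le {k : ℕ} (hk : 5 ≤ k) (hn : k ≤ n) :
    ((patternSet G k).card : ℝ) ≤
      4 * (n : ℝ) * (((n:ℝ) - 1) / ((k-1 : ℕ) : ℝ)) ^ (k-1) := by
  classical
  have h0k : 0 < k := by omega
  have hdec : (patternSet G k).card
      = ∑ v ∈ (univ : Finset (Fin n)),
          ((patternSet G k).filter (fun f => f ⟨0, h0k⟩ = v)).card :=
    Finset.card_eq_sum_card_fiberwise (fun f _ => Finset.mem_univ _)
  calc ((patternSet G k).card : ℝ)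
      = ∑ v ∈ (univ : Finset (Fin n)),
          (((patternSet G k).filter (fun f => f ⟨0, h0k⟩ = v)).card : ℝ) := by
        rw [hdec]
        push_cast
        rfl
    _ ≤ ∑ _v ∈ (univ : Finset (Fin n)),
          4 * (((n:ℝ) - 1) / ((k-1 : ℕ) : ℝ)) ^ (k-1) :=
        Finset.sum_le_sum (fun v _ => fiber_card_le G hk hn h0k v)
    _ = 4 * (n : ℝ) * (((n:ℝ) - 1) / ((k-1 : ℕ) : ℝ)) ^ (k-1) := by
        rw [Finset.sum_const, Finset.card_univ, Fintype.card_fin, nsmul_eq_mul]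
        ring

end PGaux

/-- For every `k ≥ 5` and every graph `G` on `n ≥ k` vertices,
`P(C_k, G) ≤ (2n/k) · ((n-1)/(k-1))^(k-1)` (Pippenger–Golumbic). -/
theorem cycle_count_upper_bound_PG (k n : ℕ) (hk : 5 ≤ k) (hn : k ≤ n)
    (G : SimpleGraph (Fin n)) :
    (inducedCount (SimpleGraph.cycleGraph k) G : ℝ) ≤
      (2 * (n : ℝ) / (k : ℝ)) * (((n : ℝ) - 1) / ((k : ℝ) - 1)) ^ (k - 1) := by
  classical
  have hICeq : inducedCount (SimpleGraph.cycleGraph k) G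
      = (Finset.univ.filter fun S : Finset (Fin n) =>
          S.card = Fintype.card (Fin k) ∧
            Nonempty ((G.induce (S : Set (Fin n))) ≃g SimpleGraph.cycleGraph k)).card := by
    rw [inducedCount]
  have hA := PGaux.stepA G hk hn
  rw [← hICeq] at hA
  have hAr : (inducedCount (SimpleGraph.cycleGraph k) G : ℝ) * (2 * (k:ℝ))
      ≤ ((PGaux.patternSet G k).card : ℝ) := by exact_mod_cast hA
  have hBr := PGaux.patternSet_card_le G hk hn
  have hk1 : ((k-1 : ℕ) : ℝ) = (k:ℝ) - 1 := by
    push_cast [Nat.cast_sub (show (1:ℕ) ≤ k by omega)]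
    ring
  rw [hk1] at hBr
  have hkpos : (0:ℝ) < (k:ℝ) := by
    have : 0 < k := by omega
    exact_mod_cast this
  have hgoal : (2 * (n : ℝ) / (k : ℝ)) * (((n : ℝ) - 1) / ((k : ℝ) - 1)) ^ (k - 1)
      = (4 * (n:ℝ) * (((n : ℝ) - 1) / ((k : ℝ) - 1)) ^ (k - 1)) / (2 * (k:ℝ)) := by
    field_simp
    ring
  rw [hgoal, le_div_iff₀ (by linarith)]
  linarith
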